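/- arXiv:1112.0819 — 2 statements merged into one kernel-verified Lean document; each statement's English description precedes it below -/
import Mathlib

section
/- Let M be a partial order and B₁, B₂ ∈ CWT(M). If B₁ ≤*_M B₂ and Y is a front of B₁, then there is B₂' ∈ sb(B₂) such that Y ∩ B₂' is a front of B₂' and (B₁)_{≥η} ≤*_M (B₂')_{≥η} for every η ∈ Y ∩ B₂'. -/
open Set Cardinal

universe u

variable {α : Type u}

section OrderDefs

variable [PartialOrder α]

/-- `η` and `ν` are compatible in `M`: they have a common `≤`-upper bound in `M`. -/
def Compat (M : Set α) (η ν : α) : Prop :=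
  ∃ ρ ∈ M, η ≤ ρ ∧ ν ≤ ρ

/-- The set of immediate successors of `ν` inside `B`. -/
def succIn (B : Set α) (ν : α) : Set α :=
  {ρ ∈ B | ν < ρ ∧ ¬∃ σ ∈ B, ν < σ ∧ σ < ρ}

/-- The set of maximal elements of `B`. -/
def maxIn (B : Set α) : Set α :=
  {η ∈ B | ∀ ν ∈ B, ¬η < ν}

/-- `r` is the root (least element) of `B`. -/
def IsRoot (B : Set α) (r : α) : Prop :=
  r ∈ B ∧ ∀ x ∈ B, r ≤ x

/-- `B` is a countable well-founded subtree of `M`. -/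
def CWT (M B : Set α) : Prop :=
  B ⊆ M ∧ B.Countable ∧ (∃ r, IsRoot B r) ∧
  (∀ ν ∈ B, ∀ η ∈ B, ∀ ρ ∈ B, η ≤ ν → ρ ≤ ν → η ≤ ρ ∨ ρ ≤ η) ∧
  (∀ C, C ⊆ B → IsChain (· ≤ ·) C → C.Finite) ∧
  (∀ ν ∈ B, succIn B ν = ∅ ∨ (succIn B ν).Infinite) ∧
  (∀ η ∈ B, ∀ ν ∈ B, ¬η ≤ ν → ¬ν ≤ η → ¬Compat M η ν) ∧
  (∀ ν ∈ B \ maxIn B, ∀ F : Finset α, (F : Set α) ⊆ M \ {ρ | ρ ≤ ν} →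
    {ϱ ∈ succIn B ν | ∀ ρ ∈ F, ¬Compat M ρ ϱ}.Infinite)

/-- `Y` is a front of `B`: a maximal set of pairwise incomparable members of `B`. -/
def IsFront (B Y : Set α) : Prop :=
  Y ⊆ B ∧ (∀ η ∈ Y, ∀ ν ∈ Y, η ≠ ν → ¬η ≤ ν) ∧
  (∀ ν ∈ B, ∃ η ∈ Y, η ≤ ν ∨ ν ≤ η)

/-- `B'` is an exhaustive subtree of `B`. -/
def sb (M B B' : Set α) : Prop :=
  CWT M B' ∧ B' ⊆ B ∧ (∃ r, IsRoot B r ∧ IsRoot B' r) ∧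
  ∀ ν ∈ B', succIn B' ν ⊆ succIn B ν ∧ (succIn B ν \ succIn B' ν).Finite

/-- `B'` is a positive subtree of `B`. -/
def psb (M B B' : Set α) : Prop :=
  CWT M B' ∧ B' ⊆ B ∧ (∃ r, IsRoot B r ∧ IsRoot B' r) ∧
  ∀ ν ∈ B' \ maxIn B, (succIn B' ν).Infinite ∧ succIn B' ν ⊆ succIn B ν

/-- `Y` is an almost front of `B`: an antichain of `M` whose intersection with some
exhaustive subtree `B'` of `B` is a front of `B'`. -/
def IsAlmostFront (M B Y : Set α) : Prop :=
  Y ⊆ M ∧ (∀ η ∈ Y, ∀ ν ∈ Y, η ≠ ν → ¬η ≤ ν) ∧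
  ∃ B', sb M B B' ∧ IsFront B' (Y ∩ B')

/-- The relation `B₁ ≤*_M B₂`. -/
def leStar (M B₁ B₂ : Set α) : Prop :=
  CWT M B₁ ∧ CWT M B₂ ∧ (∃ r, IsRoot B₁ r ∧ IsRoot B₂ r) ∧
  ∃ B₂', sb M B₂ B₂' ∧ psb M B₁ (B₂' ∩ B₁) ∧
    ∀ Y, IsAlmostFront M (B₂' ∩ B₁) Y → IsAlmostFront M B₂ Y

end OrderDefs
section Helpers

variable [PartialOrder α] {M : Set α}

lemma isRoot_unique {B : Set α} {r r' : α} (h : IsRoot B r) (h' : IsRoot B r') : r = r' :=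
  le_antisymm (h.2 r' h'.1) (h'.2 r h.1)

/-- In a finite nonempty chain there is a greatest element. -/
lemma chain_greatest {S : Set α} (hfin : S.Finite) (hch : IsChain (· ≤ ·) S)
    (hne : S.Nonempty) : ∃ m ∈ S, ∀ x ∈ S, x ≤ m := by
  obtain ⟨m, hm, hmax⟩ := Set.Finite.exists_maximalFor id S hfin hne
  refine ⟨m, hm, fun x hx => ?_⟩
  rcases eq_or_ne x m with rfl | hne'
  · exact le_rfl
  · rcases hch hx hm hne' with h | h
    · exact h
    · exact hmax hx h

lemma chain_least {S : Set α} (hfin : S.Finite) (hch : IsChain (· ≤ ·) S)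
    (hne : S.Nonempty) : ∃ m ∈ S, ∀ x ∈ S, m ≤ x := by
  obtain ⟨m, hm, hmin⟩ := Set.Finite.exists_minimalFor id S hfin hne
  refine ⟨m, hm, fun x hx => ?_⟩
  rcases eq_or_ne x m with rfl | hne'
  · exact le_rfl
  · rcases hch hx hm hne' with h | h
    · simpa using hmin hx h
    · exact h

/-- Comparability of elements below a common bound, in a CWT. -/
lemma CWT.comp {B : Set α} (h : CWT M B) {x y z : α} (hx : x ∈ B) (hy : y ∈ B) (hz : z ∈ B)
    (h1 : x ≤ z) (h2 : y ≤ z) : x ≤ y ∨ y ≤ x :=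
  h.2.2.2.1 z hz x hx y hy h1 h2

/-- A subset of a CWT all of whose elements lie below a common member is a finite chain,
hence has a greatest element (if nonempty). -/
lemma exists_greatest_le {B : Set α} (h : CWT M B) {T : Set α} (hT : T ⊆ B) {z : α}
    (hz : z ∈ B) (hTz : ∀ x ∈ T, x ≤ z) (hne : T.Nonempty) :
    ∃ m ∈ T, ∀ x ∈ T, x ≤ m := by
  have hch : IsChain (· ≤ ·) T := fun x hx y hy _ =>
    h.comp (hT hx) (hT hy) hz (hTz x hx) (hTz y hy)
  exact chain_greatest (h.2.2.2.2.1 T hT hch) hch hne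

lemma exists_least_le {B : Set α} (h : CWT M B) {T : Set α} (hT : T ⊆ B) {z : α}
    (hz : z ∈ B) (hTz : ∀ x ∈ T, x ≤ z) (hne : T.Nonempty) :
    ∃ m ∈ T, ∀ x ∈ T, m ≤ x := by
  have hch : IsChain (· ≤ ·) T := fun x hx y hy _ =>
    h.comp (hT hx) (hT hy) hz (hTz x hx) (hTz y hy)
  exact chain_least (h.2.2.2.2.1 T hT hch) hch hne

/-- Between μ < b in a CWT there is an immediate successor of μ below b. -/
lemma exists_succ_le {B : Set α} (h : CWT M B) {μ b : α} (hμ : μ ∈ B) (hb : b ∈ B)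
    (hlt : μ < b) : ∃ n ∈ succIn B μ, n ≤ b := by
  obtain ⟨n, ⟨hnB, hn1, hn2⟩, hnmin⟩ :=
    exists_least_le h (T := {x ∈ B | μ < x ∧ x ≤ b})
      (fun x hx => hx.1) hb (fun x hx => hx.2.2) ⟨b, hb, hlt, le_rfl⟩
  refine ⟨n, ⟨hnB, hn1, ?_⟩, hn2⟩
  rintro ⟨e, heB, he1, he2⟩
  exact absurd (hnmin e ⟨heB, he1, le_of_lt (lt_of_lt_of_le he2 hn2)⟩) (not_le_of_gt he2)

lemma maxIn_of_succ_empty {B : Set α} (h : CWT M B) {μ : α} (hμ : μ ∈ B)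
    (hs : succIn B μ = ∅) : μ ∈ maxIn B := by
  refine ⟨hμ, fun b hb hlt => ?_⟩
  obtain ⟨n, hn, -⟩ := exists_succ_le h hμ hb hlt
  exact absurd hn (by simp [hs])

/-- Existence of a maximal element above any given element, inside any subset of a CWT. -/
lemma exists_maximal_above {B : Set α} (h : CWT M B) {V : Set α} (hV : V ⊆ B) {ν : α}
    (hν : ν ∈ V) : ∃ μ, μ ∈ V ∧ ν ≤ μ ∧ ∀ z ∈ V, ¬ μ < z := by
  obtain ⟨m, hm⟩ := zorn_le₀ {x ∈ V | ν ≤ x} (fun c hc hch => by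
    rcases c.eq_empty_or_nonempty with rfl | hne
    · exact ⟨ν, ⟨hν, le_rfl⟩, by simp⟩
    · obtain ⟨m, hm, hmax⟩ := chain_greatest
        (h.2.2.2.2.1 c (fun x hx => hV (hc hx).1) hch) hch hne
      exact ⟨m, hc hm, hmax⟩)
  refine ⟨m, hm.1.1, hm.1.2, fun z hz hlt => ?_⟩
  exact absurd (le_antisymm hlt.le (hm.2 ⟨hz, le_trans hm.1.2 hlt.le⟩ hlt.le)) (ne_of_lt hlt)

end Helpers
section Helpers2

variable [PartialOrder α] {M : Set α}

/-- Master criterion for CWT of a subset with controlled immediate successors. -/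
lemma CWT_of_subset {B V : Set α} (hB : CWT M B) (hVB : V ⊆ B) (hroot : ∃ r, IsRoot V r)
    (hsucc : ∀ ν ∈ V, succIn V ν = succIn B ν ∩ V ∧ (succIn B ν \ succIn V ν).Finite) :
    CWT M V := by
  refine ⟨fun x hx => hB.1 (hVB hx), hB.2.1.mono hVB, hroot,
    fun ν hν η hη ρ hρ h1 h2 => hB.2.2.2.1 ν (hVB hν) η (hVB hη) ρ (hVB hρ) h1 h2,
    fun C hC hch => hB.2.2.2.2.1 C (hC.trans hVB) hch, ?_, ?_, ?_⟩
  · intro ν hν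
    obtain ⟨heq, hfin⟩ := hsucc ν hν
    rcases hB.2.2.2.2.2.1 ν (hVB hν) with hemp | hinf
    · left
      rw [heq, hemp, Set.empty_inter]
    · right
      refine (hinf.diff hfin).mono (fun x hx => ?_)
      rcases hx with ⟨hx1, hx2⟩
      by_contra hxV
      exact hx2 ⟨hx1, hxV⟩
  · exact fun η hη ν hν hn1 hn2 => hB.2.2.2.2.2.2.1 η (hVB hη) ν (hVB hν) hn1 hn2
  · rintro ν ⟨hν, hνmax⟩ F hF
    obtain ⟨heq, hfin⟩ := hsucc ν hν
    have hz : ∃ z ∈ V, ν < z := by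
      by_contra hcon
      push_neg at hcon
      exact hνmax ⟨hν, hcon⟩
    obtain ⟨z, hzV, hzlt⟩ := hz
    have hBmax : ν ∈ B \ maxIn B := ⟨hVB hν, fun hmax => hmax.2 z (hVB hzV) hzlt⟩
    have hinf := hB.2.2.2.2.2.2.2 ν hBmax F hF
    refine ((hinf.diff hfin).mono (fun x hx => ?_))
    rcases hx with ⟨⟨hx1, hx2⟩, hx3⟩
    refine ⟨?_, hx2⟩
    rw [heq]
    refine ⟨hx1, ?_⟩
    by_contra hxV
    exact hx3 ⟨hx1, fun hs => hxV hs.1⟩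

/-- Downward closure core lemma. -/
lemma downward_aux {B B' : Set α} (hB : CWT M B) (hB'B : B' ⊆ B)
    (hroot : ∃ r, IsRoot B r ∧ IsRoot B' r)
    (hsucc : ∀ ν ∈ B', ∀ z ∈ B', ν < z → succIn B' ν ⊆ succIn B ν) :
    ∀ x ∈ B, ∀ y ∈ B', x ≤ y → x ∈ B' := by
  intro x hx y hy hxy
  obtain ⟨r, hrB, hrB'⟩ := hroot
  -- m : greatest element of B' below x
  obtain ⟨m, ⟨hmB', hmx⟩, hmgr⟩ := exists_greatest_le hB
    (T := {z ∈ B' | z ≤ x}) (fun z hz => hB'B hz.1) hx (fun z hz => hz.2)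
    ⟨r, hrB'.1, hrB.2 x hx⟩
  by_cases hxm : x ≤ m
  · rwa [le_antisymm hxm hmx]
  exfalso
  have hmltx : m < x := lt_of_le_of_ne hmx (fun h => hxm h.ge)
  have hmy : m < y := lt_of_lt_of_le hmltx hxy
  -- n : least element of B' strictly above m, below y
  obtain ⟨n, ⟨hnB', hmn, hny⟩, hnmin⟩ := exists_least_le hB
    (T := {z ∈ B' | m < z ∧ z ≤ y}) (fun z hz => hB'B hz.1) (hB'B hy)
    (fun z hz => hz.2.2) ⟨y, hy, hmy, le_rfl⟩
  have hnsucc : n ∈ succIn B' m := by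
    refine ⟨hnB', hmn, ?_⟩
    rintro ⟨e, heB', he1, he2⟩
    exact absurd (hnmin e ⟨heB', he1, he2.le.trans hny⟩) (not_le_of_gt he2)
  have hnB : n ∈ succIn B m := hsucc m hmB' n hnB' hmn hnsucc
  rcases hB.comp hx (hB'B hnB') (hB'B hy) hxy hny with hxn | hnx
  · rcases eq_or_lt_of_le hxn with rfl | hxltn
    · exact hxm (hmgr _ ⟨hnB', le_rfl⟩)
    · exact hnB.2.2 ⟨x, hx, hmltx, hxltn⟩
  · exact absurd (hmgr n ⟨hnB', hnx⟩) (not_le_of_gt hmn)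

lemma sb_downward {B B' : Set α} (hB : CWT M B) (h : sb M B B') :
    ∀ x ∈ B, ∀ y ∈ B', x ≤ y → x ∈ B' :=
  downward_aux hB h.2.1 h.2.2.1 (fun ν hν _ _ _ => (h.2.2.2 ν hν).1)

lemma psb_downward {B B' : Set α} (hB : CWT M B) (h : psb M B B') :
    ∀ x ∈ B, ∀ y ∈ B', x ≤ y → x ∈ B' :=
  downward_aux hB h.2.1 h.2.2.1
    (fun ν hν z hz hlt => (h.2.2.2 ν ⟨hν, fun hmax => hmax.2 z (h.2.1 hz) hlt⟩).2)

lemma sb_succ_eq {B B' : Set α} (h : sb M B B') {ν : α} (hν : ν ∈ B') :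
    succIn B' ν = succIn B ν ∩ B' := by
  ext x
  constructor
  · intro hx
    exact ⟨(h.2.2.2 ν hν).1 hx, hx.1⟩
  · rintro ⟨⟨hxB, hlt, hnb⟩, hxB'⟩
    exact ⟨hxB', hlt, fun ⟨σ, hσ, h1, h2⟩ => hnb ⟨σ, h.2.1 hσ, h1, h2⟩⟩

lemma sb_maximal_to_B {B B' : Set α} (hB : CWT M B) (h : sb M B B') {μ : α} (hμ : μ ∈ B')
    (hmax : ∀ z ∈ B', ¬ μ < z) : ∀ b ∈ B, ¬ μ < b := by
  intro b hb hlt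
  obtain ⟨n, hn, -⟩ := exists_succ_le hB (h.2.1 hμ) hb hlt
  have hinf : (succIn B μ).Infinite := by
    rcases hB.2.2.2.2.2.1 μ (h.2.1 hμ) with hemp | hinf
    · exact absurd hn (by simp [hemp])
    · exact hinf
  obtain ⟨x, hx1, hx2⟩ := (hinf.diff (h.2.2.2 μ hμ).2).nonempty
  have hxB' : x ∈ succIn B' μ := by
    by_contra hcon
    exact hx2 ⟨hx1, hcon⟩
  exact hmax x hxB'.1 hxB'.2.1

lemma sb_self {B : Set α} (h : CWT M B) : sb M B B := by
  obtain ⟨r, hr⟩ := h.2.2.1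
  exact ⟨h, subset_rfl, ⟨r, hr, hr⟩, fun ν _ => ⟨subset_rfl, by simp⟩⟩

lemma sb_inter {B A C : Set α} (hB : CWT M B) (h1 : sb M B A) (h2 : sb M B C) :
    sb M B (A ∩ C) := by
  have hsub : A ∩ C ⊆ B := Set.inter_subset_left.trans h1.2.1
  have hsucc : ∀ ν ∈ A ∩ C, succIn (A ∩ C) ν = succIn B ν ∩ (A ∩ C) := by
    intro ν hν
    ext x
    constructor
    · rintro ⟨hxAC, hlt, hnb⟩
      refine ⟨⟨hsub hxAC, hlt, ?_⟩, hxAC⟩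
      rintro ⟨e, heB, he1, he2⟩
      exact hnb ⟨e, ⟨sb_downward hB h1 e heB x hxAC.1 he2.le,
        sb_downward hB h2 e heB x hxAC.2 he2.le⟩, he1, he2⟩
    · rintro ⟨⟨hxB, hlt, hnb⟩, hxAC⟩
      exact ⟨hxAC, hlt, fun ⟨σ, hσ, hs1, hs2⟩ => hnb ⟨σ, hsub hσ, hs1, hs2⟩⟩
  obtain ⟨r, hrB, hrA⟩ := h1.2.2.1
  obtain ⟨r', hr'B, hr'C⟩ := h2.2.2.1
  have hrr : r' = r := isRoot_unique hr'B hrB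
  subst hrr
  have hrAC : IsRoot (A ∩ C) r' := ⟨⟨hrA.1, hr'C.1⟩, fun x hx => hrA.2 x hx.1⟩
  have hdiff : ∀ ν ∈ A ∩ C, (succIn B ν \ succIn (A ∩ C) ν).Finite := by
    intro ν hν
    refine (((h1.2.2.2 ν hν.1).2).union ((h2.2.2.2 ν hν.2).2)).subset ?_
    rintro x ⟨hxB, hxn⟩
    rw [hsucc ν hν] at hxn
    have : x ∉ A ∨ x ∉ C := by
      by_contra hcon
      push_neg at hcon
      exact hxn ⟨hxB, hcon.1, hcon.2⟩
    rcases this with hx | hx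
    · exact Or.inl ⟨hxB, fun hs => hx hs.1⟩
    · exact Or.inr ⟨hxB, fun hs => hx hs.1⟩
  have hCWT : CWT M (A ∩ C) := CWT_of_subset hB hsub ⟨r', hrAC⟩
    (fun ν hν => ⟨hsucc ν hν, hdiff ν hν⟩)
  refine ⟨hCWT, hsub, ⟨r', hrB, hrAC⟩, fun ν hν => ⟨?_, hdiff ν hν⟩⟩
  rw [hsucc ν hν]
  exact Set.inter_subset_left

end Helpers2
section Helpers3

variable [PartialOrder α] {M : Set α}

lemma succIn_inter_cone {B : Set α} {η ν : α} (hν : ν ∈ B ∩ {ρ | η ≤ ρ}) :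
    succIn (B ∩ {ρ | η ≤ ρ}) ν = succIn B ν := by
  ext x
  constructor
  · rintro ⟨⟨hxB, _⟩, hlt, hnb⟩
    exact ⟨hxB, hlt, fun ⟨e, heB, h1, h2⟩ => hnb ⟨e, ⟨heB, hν.2.trans h1.le⟩, h1, h2⟩⟩
  · rintro ⟨hxB, hlt, hnb⟩
    exact ⟨⟨hxB, hν.2.trans hlt.le⟩, hlt, fun ⟨e, he, h1, h2⟩ => hnb ⟨e, he.1, h1, h2⟩⟩

lemma isRoot_cone {B : Set α} {η : α} (hη : η ∈ B) : IsRoot (B ∩ {ρ | η ≤ ρ}) η :=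
  ⟨⟨hη, le_rfl⟩, fun _ hx => hx.2⟩

lemma CWT_cone {B : Set α} (h : CWT M B) {η : α} (hη : η ∈ B) :
    CWT M (B ∩ {ρ | η ≤ ρ}) := by
  refine CWT_of_subset h Set.inter_subset_left ⟨η, isRoot_cone hη⟩ (fun ν hν => ?_)
  rw [succIn_inter_cone hν]
  constructor
  · have hsub : succIn B ν ⊆ B ∩ {ρ | η ≤ ρ} := fun x hx => ⟨hx.1, hν.2.trans hx.2.1.le⟩
    exact (Set.inter_eq_self_of_subset_left hsub).symm
  · simp

lemma maxIn_cone_iff {B : Set α} {η ν : α} (hν : ν ∈ B ∩ {ρ | η ≤ ρ}) :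
    ν ∈ maxIn (B ∩ {ρ | η ≤ ρ}) ↔ ν ∈ maxIn B := by
  constructor
  · rintro ⟨-, hmax⟩
    exact ⟨hν.1, fun x hx hlt => hmax x ⟨hx, hν.2.trans hlt.le⟩ hlt⟩
  · rintro ⟨-, hmax⟩
    exact ⟨hν, fun x hx hlt => hmax x hx.1 hlt⟩

lemma psb_cone {B p : Set α} (h : psb M B p) {η : α} (hη : η ∈ p) :
    psb M (B ∩ {ρ | η ≤ ρ}) (p ∩ {ρ | η ≤ ρ}) := by
  refine ⟨CWT_cone h.1 hη, fun x hx => ⟨h.2.1 hx.1, hx.2⟩,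
    ⟨η, isRoot_cone (h.2.1 hη), isRoot_cone hη⟩, ?_⟩
  rintro ν ⟨hν, hνmax⟩
  have hνB : ν ∈ B ∩ {ρ | η ≤ ρ} := ⟨h.2.1 hν.1, hν.2⟩
  have hnmax : ν ∉ maxIn B := fun hm => hνmax ((maxIn_cone_iff hνB).2 hm)
  obtain ⟨hinf, hsub⟩ := h.2.2.2 ν ⟨hν.1, hnmax⟩
  rw [succIn_inter_cone hν, succIn_inter_cone hνB]
  exact ⟨hinf, hsub⟩

lemma psb_maxIn_sub {B p : Set α} (h : psb M B p) {μ : α} (hμ : μ ∈ p)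
    (hmax : ∀ x ∈ p, ¬ μ < x) : μ ∈ maxIn B := by
  by_contra hcon
  obtain ⟨x, hx⟩ := (h.2.2.2 μ ⟨hμ, hcon⟩).1.nonempty
  exact hmax x hx.1 hx.2.1

lemma maxIn_front {B : Set α} (h : CWT M B) : IsFront B (maxIn B) := by
  refine ⟨fun x hx => hx.1, fun a ha b hb hne hle => ha.2 b hb.1 (lt_of_le_of_ne hle hne), ?_⟩
  intro ν hν
  obtain ⟨μ, hμB, hle, hmax⟩ := exists_maximal_above h subset_rfl hν
  exact ⟨μ, ⟨hμB, hmax⟩, Or.inr hle⟩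

lemma psb_front_trace {B p Y : Set α} (hB : CWT M B) (hp : psb M B p) (hY : IsFront B Y) :
    IsFront p (Y ∩ p) := by
  refine ⟨Set.inter_subset_right, fun a ha b hb hne => hY.2.1 a ha.1 b hb.1 hne, ?_⟩
  intro ν hν
  obtain ⟨μ, hμp, hνμ, hmax⟩ := exists_maximal_above hp.1 subset_rfl hν
  have hμmaxB : μ ∈ maxIn B := psb_maxIn_sub hp hμp hmax
  obtain ⟨y, hyY, hc⟩ := hY.2.2 μ (hp.2.1 hμp)
  have hyμ : y ≤ μ := by
    rcases hc with h | h
    · exact h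
    · rcases eq_or_lt_of_le h with rfl | hlt
      · exact le_rfl
      · exact absurd hlt (hμmaxB.2 y (hY.1 hyY))
  have hyp : y ∈ p := psb_downward hB hp y (hY.1 hyY) μ hμp hyμ
  rcases hB.comp (hp.2.1 hν) (hY.1 hyY) (hp.2.1 hμp) hνμ hyμ with h | h
  · exact ⟨y, ⟨hyY, hyp⟩, Or.inr h⟩
  · exact ⟨y, ⟨hyY, hyp⟩, Or.inl h⟩

lemma front_shrink {B W₀ W Q : Set α} (hB : CWT M B) (h1 : sb M B W) (hsub : W ⊆ W₀)
    (hQ : Q ⊆ B) (hf : IsFront W₀ (Q ∩ W₀)) : IsFront W (Q ∩ W) := by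
  refine ⟨Set.inter_subset_right,
    fun a ha b hb hne => hf.2.1 a ⟨ha.1, hsub ha.2⟩ b ⟨hb.1, hsub hb.2⟩ hne, ?_⟩
  intro ν hν
  obtain ⟨μ, hμW, hνμ, hmax⟩ := exists_maximal_above hB h1.2.1 hν
  have hμmaxB : ∀ b ∈ B, ¬ μ < b := sb_maximal_to_B hB h1 hμW hmax
  obtain ⟨z, ⟨hzQ, _⟩, hc⟩ := hf.2.2 μ (hsub hμW)
  have hzμ : z ≤ μ := by
    rcases hc with h | h
    · exact h
    · rcases eq_or_lt_of_le h with rfl | hlt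
      · exact le_rfl
      · exact absurd hlt (hμmaxB z (hQ hzQ))
  have hzW : z ∈ W := sb_downward hB h1 z (hQ hzQ) μ hμW hzμ
  rcases hB.comp (h1.2.1 hν) (hQ hzQ) (h1.2.1 hμW) hνμ hzμ with h | h
  · exact ⟨z, ⟨hzQ, hzW⟩, Or.inr h⟩
  · exact ⟨z, ⟨hzQ, hzW⟩, Or.inl h⟩

end Helpers3
section MainCore

variable [PartialOrder α] {M B₁ B₂ B₂'' W : Set α}

/-- Alignment: every immediate successor in `W` of a node of `W ∩ B₁` lies below an
immediate successor in `W ∩ B₁`. -/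
lemma succ_map (h₁ : CWT M B₁) (h₂ : CWT M B₂) (hsb'' : sb M B₂ B₂'')
    (hpsb : psb M B₁ (B₂'' ∩ B₁)) (hW : sb M B₂ W) (hWsub : W ⊆ B₂'')
    (hfr : IsFront W (maxIn (B₂'' ∩ B₁) ∩ W)) {q : α} (hq : q ∈ W ∩ B₁)
    (hqm : q ∉ maxIn B₁) :
    ∀ σ ∈ succIn W q, ∃ a, a ∈ succIn (W ∩ B₁) q ∧ σ ≤ a := by
  have hstar_sub : B₂'' ∩ B₁ ⊆ B₂ := fun x hx => hsb''.2.1 hx.1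
  have hqB₂ : q ∈ B₂ := hW.2.1 hq.1
  have hqstar : q ∈ B₂'' ∩ B₁ := ⟨hWsub hq.1, hq.2⟩
  intro σ hσ
  have hσB₂succ : σ ∈ succIn B₂ q := (hW.2.2.2 q hq.1).1 hσ
  have hσB₂ : σ ∈ B₂ := hσB₂succ.1
  have hqσ : q < σ := hσB₂succ.2.1
  obtain ⟨z, ⟨hzQ, hzW⟩, hc⟩ := hfr.2.2 σ hσ.1
  have hzstar : z ∈ B₂'' ∩ B₁ := hzQ.1
  have hzB₂ : z ∈ B₂ := hstar_sub hzstar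
  rcases hc with hzσ | hσz
  · -- z ≤ σ : then z = σ and σ itself is the successor in W ∩ B₁
    rcases h₂.comp hzB₂ hqB₂ hσB₂ hzσ hqσ.le with hzq | hqz
    · rcases eq_or_lt_of_le hzq with rfl | hlt
      · exact absurd (psb_maxIn_sub hpsb hzstar hzQ.2) hqm
      · exact absurd hlt (fun h => hzQ.2 q hqstar h)
    · rcases eq_or_lt_of_le hqz with rfl | hlt
      · exact absurd (psb_maxIn_sub hpsb hzstar hzQ.2) hqm
      · have hzeq : z = σ := by
          rcases eq_or_lt_of_le hzσ with h | h
          · exact h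
          · exact absurd ⟨z, hzB₂, hlt, h⟩ hσB₂succ.2.2
        subst hzeq
        refine ⟨z, ⟨⟨hzW, hzstar.2⟩, hqσ, ?_⟩, le_rfl⟩
        rintro ⟨e, heWB₁, he1, he2⟩
        exact hσB₂succ.2.2 ⟨e, hW.2.1 heWB₁.1, he1, he2⟩
  · -- σ ≤ z : take the least element of B₂'' ∩ B₁ in (q, z]
    have hqz : q < z := lt_of_lt_of_le hqσ hσz
    obtain ⟨a, ⟨hastar, hqa, haz⟩, hamin⟩ := exists_least_le h₂
      (T := {x ∈ B₂'' ∩ B₁ | q < x ∧ x ≤ z}) (fun x hx => hstar_sub hx.1) hzB₂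
      (fun x hx => hx.2.2) ⟨z, hzstar, hqz, le_rfl⟩
    have haB₂ : a ∈ B₂ := hstar_sub hastar
    have haW : a ∈ W := sb_downward h₂ hW a haB₂ z hzW haz
    have hasucc : a ∈ succIn (W ∩ B₁) q := by
      refine ⟨⟨haW, hastar.2⟩, hqa, ?_⟩
      rintro ⟨e, ⟨heW, heB₁⟩, he1, he2⟩
      exact absurd (hamin e ⟨⟨hWsub heW, heB₁⟩, he1, he2.le.trans haz⟩) (not_le_of_gt he2)
    refine ⟨a, hasucc, ?_⟩
    rcases h₂.comp hσB₂ haB₂ hzB₂ hσz haz with h | h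
    · exact h
    · rcases eq_or_lt_of_le h with rfl | hlt
      · exact le_rfl
      · exact absurd ⟨a, haB₂, hqa, hlt⟩ hσB₂succ.2.2

/-- Infinitely many aligned successors. -/
lemma succ_infinite (h₁ : CWT M B₁) (h₂ : CWT M B₂) (hsb'' : sb M B₂ B₂'')
    (hpsb : psb M B₁ (B₂'' ∩ B₁)) (hW : sb M B₂ W) (hWsub : W ⊆ B₂'')
    (hfr : IsFront W (maxIn (B₂'' ∩ B₁) ∩ W)) {q : α} (hq : q ∈ W ∩ B₁)
    (hqm : q ∉ maxIn B₁) {S : Set α} (hS : S ⊆ succIn W q) (hSinf : S.Infinite) :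
    {a ∈ succIn (W ∩ B₁) q | ∃ σ ∈ S, σ ≤ a}.Infinite := by
  have hmap : ∀ σ : α, ∃ a, σ ∈ succIn W q → (a ∈ succIn (W ∩ B₁) q ∧ σ ≤ a) := by
    intro σ
    by_cases hσ : σ ∈ succIn W q
    · obtain ⟨a, h1, h2⟩ := succ_map h₁ h₂ hsb'' hpsb hW hWsub hfr hq hqm σ hσ
      exact ⟨a, fun _ => ⟨h1, h2⟩⟩
    · exact ⟨σ, fun h => absurd h hσ⟩
  choose f hf using hmap
  refine Set.infinite_of_injOn_mapsTo (f := f) ?_ ?_ hSinf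
  · intro σ hσ σ' hσ' heq
    have h1 := hf σ (hS hσ)
    have h2 := hf σ' (hS hσ')
    rw [heq] at h1
    have hσs : σ ∈ succIn B₂ q := (hW.2.2.2 q hq.1).1 (hS hσ)
    have hσ's : σ' ∈ succIn B₂ q := (hW.2.2.2 q hq.1).1 (hS hσ')
    have haB₂ : f σ' ∈ B₂ := hW.2.1 h2.1.1.1
    rcases h₂.comp hσs.1 hσ's.1 haB₂ h1.2 h2.2 with h | h
    · rcases eq_or_lt_of_le h with heq' | hlt
      · exact heq'
      · exact absurd ⟨σ, hσs.1, hσs.2.1, hlt⟩ hσ's.2.2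
    · rcases eq_or_lt_of_le h with heq' | hlt
      · exact heq'.symm
      · exact absurd ⟨σ', hσ's.1, hσ's.2.1, hlt⟩ hσs.2.2
  · intro σ hσ
    exact ⟨(hf σ (hS hσ)).1, σ, hσ, (hf σ (hS hσ)).2⟩

end MainCore
section MainPart1

variable [PartialOrder α] {M B₁ B₂ B₂'' W : Set α}

lemma part1 (h₁ : CWT M B₁) (h₂ : CWT M B₂) (hsb'' : sb M B₂ B₂'')
    (hpsb : psb M B₁ (B₂'' ∩ B₁)) (hW : sb M B₂ W) (hWsub : W ⊆ B₂'')
    (hfr : IsFront W (maxIn (B₂'' ∩ B₁) ∩ W))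
    (hroots : ∃ r, IsRoot B₁ r ∧ IsRoot B₂ r) :
    psb M B₁ (W ∩ B₁) := by
  have hstar_sub : B₂'' ∩ B₁ ⊆ B₂ := fun x hx => hsb''.2.1 hx.1
  obtain ⟨r, hrB₁, hrB₂⟩ := hroots
  obtain ⟨r', hr'B₂, hr'W⟩ := hW.2.2.1
  have hrr : r' = r := isRoot_unique hr'B₂ hrB₂
  subst hrr
  have hrp : IsRoot (W ∩ B₁) r' := ⟨⟨hr'W.1, hrB₁.1⟩, fun x hx => hrB₁.2 x hx.2⟩
  -- infinitude of successors at non-B₁-maximal nodes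
  have hinf : ∀ q ∈ W ∩ B₁, q ∉ maxIn B₁ → (succIn (W ∩ B₁) q).Infinite := by
    intro q hq hqm
    have hqstar : q ∈ B₂'' ∩ B₁ := ⟨hWsub hq.1, hq.2⟩
    obtain ⟨x, hxstar, hqx, -⟩ := (hpsb.2.2.2 q ⟨hqstar, hqm⟩).1.nonempty
    have hWinf : (succIn W q).Infinite := by
      obtain ⟨n, hn, -⟩ := exists_succ_le h₂ (hW.2.1 hq.1) (hstar_sub hxstar) hqx
      have hB₂inf : (succIn B₂ q).Infinite := by
        rcases h₂.2.2.2.2.2.1 q (hW.2.1 hq.1) with hemp | hinf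
        · exact absurd hn (by simp [hemp])
        · exact hinf
      refine (hB₂inf.diff (hW.2.2.2 q hq.1).2).mono (fun y hy => ?_)
      by_contra hcon
      exact hy.2 ⟨hy.1, hcon⟩
    exact (succ_infinite h₁ h₂ hsb'' hpsb hW hWsub hfr hq hqm subset_rfl hWinf).mono
      (fun a ha => ha.1)
  have hCWT : CWT M (W ∩ B₁) := by
    refine ⟨fun x hx => h₁.1 hx.2, h₁.2.1.mono Set.inter_subset_right, ⟨r', hrp⟩,
      fun ν hν η hη ρ hρ h1 h2 =>
        h₂.2.2.2.1 ν (hW.2.1 hν.1) η (hW.2.1 hη.1) ρ (hW.2.1 hρ.1) h1 h2,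
      fun C hC hch => h₁.2.2.2.2.1 C (fun x hx => (hC hx).2) hch, ?_, ?_, ?_⟩
    · intro q hq
      by_cases hne : succIn (W ∩ B₁) q = ∅
      · exact Or.inl hne
      right
      obtain ⟨x, hx⟩ := Set.nonempty_iff_ne_empty.2 hne
      have hqm : q ∉ maxIn B₁ := fun hm => hm.2 x hx.1.2 hx.2.1
      exact hinf q hq hqm
    · exact fun a ha b hb h1 h2 => h₁.2.2.2.2.2.2.1 a ha.2 b hb.2 h1 h2
    · rintro q ⟨hq, hqmax⟩ F hF
      have hx : ∃ x ∈ W ∩ B₁, q < x := by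
        by_contra hcon
        push_neg at hcon
        exact hqmax ⟨hq, hcon⟩
      obtain ⟨x, hxp, hqx⟩ := hx
      have hqm : q ∉ maxIn B₁ := fun hm => hm.2 x hxp.2 hqx
      have hqWm : q ∈ W \ maxIn W := ⟨hq.1, fun hm => hm.2 x hxp.1 hqx⟩
      have hWf := hW.1.2.2.2.2.2.2.2 q hqWm F hF
      refine (succ_infinite h₁ h₂ hsb'' hpsb hW hWsub hfr hq hqm
        (S := {σ ∈ succIn W q | ∀ ρ ∈ F, ¬Compat M ρ σ}) (fun σ hσ => hσ.1) hWf).mono ?_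
      rintro a ⟨ha, σ, hσ, hσa⟩
      refine ⟨ha, fun ρ hρ ⟨u, huM, hρu, hau⟩ => hσ.2 ρ hρ ⟨u, huM, hρu, hσa.trans hau⟩⟩
  refine ⟨hCWT, Set.inter_subset_right, ⟨r', hrB₁, hrp⟩, ?_⟩
  rintro q ⟨hq, hqm⟩
  have hqstar : q ∈ B₂'' ∩ B₁ := ⟨hWsub hq.1, hq.2⟩
  refine ⟨hinf q hq hqm, ?_⟩
  intro x hx
  have hxstar : x ∈ succIn (B₂'' ∩ B₁) q := by
    refine ⟨⟨hWsub hx.1.1, hx.1.2⟩, hx.2.1, ?_⟩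
    rintro ⟨e, hestar, he1, he2⟩
    have heW : e ∈ W := sb_downward h₂ hW e (hstar_sub hestar) x hx.1.1 he2.le
    exact hx.2.2 ⟨e, ⟨heW, hestar.2⟩, he1, he2⟩
  exact (hpsb.2.2.2 q ⟨hqstar, hqm⟩).2 hxstar

end MainPart1
section MainPart2

variable [PartialOrder α] {M B₁ B₂ B₂'' W Y : Set α}

lemma part2 (h₁ : CWT M B₁) (h₂ : CWT M B₂) (hsb'' : sb M B₂ B₂'')
    (hpsb : psb M B₁ (B₂'' ∩ B₁)) (hW : sb M B₂ W) (hWsub : W ⊆ B₂'')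
    (hfr : IsFront W (maxIn (B₂'' ∩ B₁) ∩ W))
    (hroots : ∃ r, IsRoot B₁ r ∧ IsRoot B₂ r) (hY : IsFront B₁ Y) :
    IsFront W (Y ∩ W) := by
  have hp := part1 h₁ h₂ hsb'' hpsb hW hWsub hfr hroots
  have hYp : IsFront (W ∩ B₁) (Y ∩ (W ∩ B₁)) := psb_front_trace h₁ hp hY
  refine ⟨Set.inter_subset_right, fun a ha b hb hne => hY.2.1 a ha.1 b hb.1 hne, ?_⟩
  intro ν hν
  obtain ⟨μ, hμW, hνμ, hmax⟩ := exists_maximal_above h₂ hW.2.1 hν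
  have hμB₂max : ∀ b ∈ B₂, ¬ μ < b := sb_maximal_to_B h₂ hW hμW hmax
  obtain ⟨z, ⟨hzQ, hzW⟩, hc⟩ := hfr.2.2 μ hμW
  have hzB₂ : z ∈ B₂ := hsb''.2.1 hzQ.1.1
  have hzμ : z ≤ μ := by
    rcases hc with h | h
    · exact h
    · rcases eq_or_lt_of_le h with rfl | hlt
      · exact le_rfl
      · exact absurd hlt (hμB₂max z hzB₂)
  have hzp : z ∈ W ∩ B₁ := ⟨hzW, hzQ.1.2⟩
  obtain ⟨y, hy, hcy⟩ := hYp.2.2 z hzp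
  have hyz : y ≤ z := by
    rcases hcy with h | h
    · exact h
    · rcases eq_or_lt_of_le h with rfl | hlt
      · exact le_rfl
      · exact absurd hlt ((psb_maxIn_sub hpsb hzQ.1 hzQ.2).2 y (hY.1 hy.1))
  have hyμ : y ≤ μ := hyz.trans hzμ
  rcases h₂.comp (hW.2.1 hν) (hW.2.1 hy.2.1) (hW.2.1 hμW) hνμ hyμ with h | h
  · exact ⟨y, ⟨hy.1, hy.2.1⟩, Or.inr h⟩
  · exact ⟨y, ⟨hy.1, hy.2.1⟩, Or.inl h⟩

/-- Alignment of arbitrary nodes of `W` with the next level of `W ∩ B₁`. -/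
lemma align (h₂ : CWT M B₂) (hsb'' : sb M B₂ B₂'') (hW : sb M B₂ W) (hWsub : W ⊆ B₂'')
    (hfr : IsFront W (maxIn (B₂'' ∩ B₁) ∩ W)) {ν b : α} (hν : ν ∈ W) (hνp : ν ∉ W ∩ B₁)
    (hb : b ∈ W ∩ B₁) (hbν : b ≤ ν) (hbgr : ∀ x ∈ W ∩ B₁, x ≤ ν → x ≤ b)
    (hbm : ∃ x ∈ W ∩ B₁, b < x) :
    ∃ a, a ∈ succIn (W ∩ B₁) b ∧ ν ≤ a := by
  have hstar_sub : B₂'' ∩ B₁ ⊆ B₂ := fun x hx => hsb''.2.1 hx.1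
  obtain ⟨z, ⟨hzQ, hzW⟩, hc⟩ := hfr.2.2 ν hν
  have hzB₂ : z ∈ B₂ := hstar_sub hzQ.1
  rcases hc with hzν | hνz
  · exfalso
    have hzp : z ∈ W ∩ B₁ := ⟨hzW, hzQ.1.2⟩
    have hzb : z ≤ b := hbgr z hzp hzν
    rcases eq_or_lt_of_le hzb with rfl | hlt
    · obtain ⟨x, hxp, hbx⟩ := hbm
      exact hzQ.2 x ⟨hWsub hxp.1, hxp.2⟩ hbx
    · exact hzQ.2 b ⟨hWsub hb.1, hb.2⟩ hlt
  · have hνz' : ν < z := lt_of_le_of_ne hνz (fun h => hνp (h ▸ ⟨hzW, hzQ.1.2⟩))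
    have hbz : b < z := lt_of_le_of_lt hbν hνz'
    obtain ⟨a, ⟨hastar, hba, haz⟩, hamin⟩ := exists_least_le h₂
      (T := {x ∈ B₂'' ∩ B₁ | b < x ∧ x ≤ z}) (fun x hx => hstar_sub hx.1) hzB₂
      (fun x hx => hx.2.2) ⟨z, hzQ.1, hbz, le_rfl⟩
    have haB₂ : a ∈ B₂ := hstar_sub hastar
    have haW : a ∈ W := sb_downward h₂ hW a haB₂ z hzW haz
    have hap : a ∈ W ∩ B₁ := ⟨haW, hastar.2⟩
    have hasucc : a ∈ succIn (W ∩ B₁) b := by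
      refine ⟨hap, hba, ?_⟩
      rintro ⟨e, ⟨heW, heB₁⟩, he1, he2⟩
      exact absurd (hamin e ⟨⟨hWsub heW, heB₁⟩, he1, he2.le.trans haz⟩) (not_le_of_gt he2)
    refine ⟨a, hasucc, ?_⟩
    rcases h₂.comp (hW.2.1 hν) haB₂ hzB₂ hνz haz with h | h
    · exact h
    · exact absurd (hbgr a hap h) (not_le_of_gt hba)

end MainPart2
section MainPart3

variable [PartialOrder α] {M B₁ B₂ B₂'' W : Set α}

lemma part3 (h₁ : CWT M B₁) (h₂ : CWT M B₂) (hsb'' : sb M B₂ B₂'')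
    (hpsb : psb M B₁ (B₂'' ∩ B₁)) (hW : sb M B₂ W) (hWsub : W ⊆ B₂'')
    (hfr : IsFront W (maxIn (B₂'' ∩ B₁) ∩ W))
    (hroots : ∃ r, IsRoot B₁ r ∧ IsRoot B₂ r) {η : α} (hη : η ∈ W ∩ B₁) :
    leStar M (B₁ ∩ {ρ | η ≤ ρ}) (W ∩ {ρ | η ≤ ρ}) := by
  have hp : psb M B₁ (W ∩ B₁) := part1 h₁ h₂ hsb'' hpsb hW hWsub hfr hroots
  have hECWT : CWT M (W ∩ {ρ | η ≤ ρ}) := CWT_cone hW.1 hη.1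
  have hseteq : (W ∩ {ρ | η ≤ ρ}) ∩ (B₁ ∩ {ρ | η ≤ ρ}) = (W ∩ B₁) ∩ {ρ | η ≤ ρ} := by
    ext x
    constructor
    · rintro ⟨⟨h1, h2⟩, ⟨h3, -⟩⟩
      exact ⟨⟨h1, h3⟩, h2⟩
    · rintro ⟨⟨h1, h3⟩, h2⟩
      exact ⟨⟨h1, h2⟩, ⟨h3, h2⟩⟩
  have hppη : psb M (B₁ ∩ {ρ | η ≤ ρ}) ((W ∩ B₁) ∩ {ρ | η ≤ ρ}) := psb_cone hp hη
  refine ⟨CWT_cone h₁ hη.2, hECWT,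
    ⟨η, isRoot_cone hη.2, isRoot_cone hη.1⟩,
    W ∩ {ρ | η ≤ ρ}, sb_self hECWT, by rw [hseteq]; exact hppη, ?_⟩
  -- the transfer of almost fronts
  intro Y' hY'
  rw [hseteq] at hY'
  obtain ⟨hY'M, hY'anti, F, hF, hFfr⟩ := hY'
  -- notation: pη = (W ∩ B₁) ∩ cone, E = W ∩ cone
  have hpηCWT : CWT M ((W ∩ B₁) ∩ {ρ | η ≤ ρ}) := hppη.1
  have hpη_sub_E : (W ∩ B₁) ∩ {ρ | η ≤ ρ} ⊆ W ∩ {ρ | η ≤ ρ} := fun x hx => ⟨hx.1.1, hx.2⟩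
  have hpη_sub_B₂ : (W ∩ B₁) ∩ {ρ | η ≤ ρ} ⊆ B₂ := fun x hx => hW.2.1 hx.1.1
  have hE_sub_B₂ : W ∩ {ρ | η ≤ ρ} ⊆ B₂ := fun x hx => hW.2.1 hx.1
  have hF_sub : F ⊆ (W ∩ B₁) ∩ {ρ | η ≤ ρ} := hF.2.1
  have hηF : η ∈ F := by
    obtain ⟨r0, hr0, hr0F⟩ := hF.2.2.1
    have : r0 = η := isRoot_unique hr0 (isRoot_cone hη)
    exact this ▸ hr0F.1
  -- the candidate subtree V
  set V : Set α := {ν ∈ W ∩ {ρ | η ≤ ρ} |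
    (∃ f ∈ F, ν ≤ f) ∨ ∃ b ∈ F, b ∈ maxIn ((W ∩ B₁) ∩ {ρ | η ≤ ρ}) ∧ b ≤ ν} with hVdef
  have hVE : V ⊆ W ∩ {ρ | η ≤ ρ} := fun x hx => hx.1
  have hηV : η ∈ V := ⟨⟨hη.1, le_rfl⟩, Or.inl ⟨η, hηF, le_rfl⟩⟩
  have hηrootV : IsRoot V η := ⟨hηV, fun x hx => (hVE hx).2⟩
  -- greatest element of W ∩ B₁ below a node of E
  have hgr : ∀ ν ∈ W ∩ {ρ | η ≤ ρ}, ∃ b, (b ∈ (W ∩ B₁) ∩ {ρ | η ≤ ρ}) ∧ b ≤ ν ∧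
      (∀ x ∈ W ∩ B₁, x ≤ ν → x ≤ b) := by
    intro ν hν
    obtain ⟨b, ⟨hbp, hbν⟩, hbgr⟩ := exists_greatest_le h₂
      (T := {x ∈ W ∩ B₁ | x ≤ ν}) (fun x hx => hW.2.1 hx.1.1) (hE_sub_B₂ hν)
      (fun x hx => hx.2) ⟨η, hη, hν.2⟩
    exact ⟨b, ⟨hbp, hbgr η ⟨hη, hν.2⟩⟩, hbν, fun x hx hxν => hbgr x ⟨hx, hxν⟩⟩
  -- classification of successors of a node of V (main case)
  have hclass : ∀ ρ ∈ V, ∀ b, b ∈ (W ∩ B₁) ∩ {ρ | η ≤ ρ} → b ≤ ρ →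
      (∀ x ∈ W ∩ B₁, x ≤ ρ → x ≤ b) → b ∈ F → b ∉ maxIn ((W ∩ B₁) ∩ {ρ | η ≤ ρ}) →
      ∀ x ∈ succIn (W ∩ {ρ | η ≤ ρ}) ρ, x ∈ V ∨
        ∃ a, a ∈ succIn ((W ∩ B₁) ∩ {ρ | η ≤ ρ}) b ∧ a ∉ F ∧ x ≤ a := by
    intro ρ hρ b hbpη hbρ hbgr hbF hbmax x hx
    have hρE : ρ ∈ W ∩ {ρ' | η ≤ ρ'} := hVE hρ
    have hxE : x ∈ W ∩ {ρ' | η ≤ ρ'} := hx.1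
    have hρx : ρ < x := hx.2.1
    have hxB₂ : x ∈ B₂ := hE_sub_B₂ hxE
    have hρB₂ : ρ ∈ B₂ := hE_sub_B₂ hρE
    by_cases hxB₁ : x ∈ B₁
    · -- x itself is the next element of W ∩ B₁
      have hxpη : x ∈ (W ∩ B₁) ∩ {ρ' | η ≤ ρ'} := ⟨⟨hxE.1, hxB₁⟩, hxE.2⟩
      have hxsucc : x ∈ succIn ((W ∩ B₁) ∩ {ρ' | η ≤ ρ'}) b := by
        refine ⟨hxpη, lt_of_le_of_lt hbρ hρx, ?_⟩
        rintro ⟨e, hepη, he1, he2⟩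
        have heB₂ : e ∈ B₂ := hpη_sub_B₂ hepη
        rcases h₂.comp heB₂ hρB₂ hxB₂ he2.le hρx.le with heρ | hρe
        · exact absurd (hbgr e hepη.1 heρ) (not_le_of_gt he1)
        · rcases eq_or_lt_of_le hρe with rfl | hlt
          · exact absurd (hbgr ρ hepη.1 le_rfl) (not_le_of_gt he1)
          · exact hx.2.2 ⟨e, hpη_sub_E hepη, hlt, he2⟩
      by_cases hxF : x ∈ F
      · exact Or.inl ⟨hxE, Or.inl ⟨x, hxF, le_rfl⟩⟩
      · exact Or.inr ⟨x, hxsucc, hxF, le_rfl⟩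
    · -- x is off B₁ : use the alignment lemma
      have hxp : x ∉ W ∩ B₁ := fun h => hxB₁ h.2
      have hgrx : ∀ e ∈ W ∩ B₁, e ≤ x → e ≤ b := by
        intro e he hex
        by_cases hηe : η ≤ e
        · have heE : e ∈ W ∩ {ρ' | η ≤ ρ'} := ⟨he.1, hηe⟩
          rcases h₂.comp (hW.2.1 he.1) hρB₂ hxB₂ hex hρx.le with heρ | hρe
          · exact hbgr e he heρ
          · rcases eq_or_lt_of_le hρe with rfl | hlt
            · exact hbgr ρ he le_rfl
            · have hex' : e < x := lt_of_le_of_ne hex (fun h => hxB₁ (h ▸ he.2))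
              exact absurd ⟨e, heE, hlt, hex'⟩ hx.2.2
        · rcases h₂.comp (hW.2.1 hη.1) (hW.2.1 he.1) hxB₂ hxE.2 hex with h | h
          · exact absurd h hηe
          · exact h.trans hbpη.2
      have hbm : ∃ x' ∈ W ∩ B₁, b < x' := by
        by_contra hcon
        push_neg at hcon
        exact hbmax ⟨hbpη, fun z hz hbz => hcon z hz.1 hbz⟩
      obtain ⟨a, hasucc, hxa⟩ := align h₂ hsb'' hW hWsub hfr hxE.1 hxp hbpη.1
        (hbρ.trans hρx.le) hgrx hbm
      have hapη : a ∈ (W ∩ B₁) ∩ {ρ' | η ≤ ρ'} :=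
        ⟨hasucc.1, hbpη.2.trans hasucc.2.1.le⟩
      have hasucc' : a ∈ succIn ((W ∩ B₁) ∩ {ρ' | η ≤ ρ'}) b := by
        refine ⟨hapη, hasucc.2.1, ?_⟩
        rintro ⟨e, hepη, he1, he2⟩
        exact hasucc.2.2 ⟨e, hepη.1, he1, he2⟩
      by_cases haF : a ∈ F
      · exact Or.inl ⟨hxE, Or.inl ⟨a, haF, hxa⟩⟩
      · exact Or.inr ⟨a, hasucc', haF, hxa⟩
  -- V is convex within E
  have hconv : ∀ x ∈ V, ∀ e ∈ W ∩ {ρ | η ≤ ρ}, e ≤ x → e ∈ V := by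
    intro x hx e heE hex
    rcases hx.2 with ⟨f, hfF, hxf⟩ | ⟨b', hb'F, hb'max, hb'x⟩
    · exact ⟨heE, Or.inl ⟨f, hfF, hex.trans hxf⟩⟩
    · rcases h₂.comp (hE_sub_B₂ heE) (hpη_sub_B₂ (hF_sub hb'F)) (hE_sub_B₂ hx.1)
        hex hb'x with h | h
      · exact ⟨heE, Or.inl ⟨b', hb'F, h⟩⟩
      · exact ⟨heE, Or.inr ⟨b', hb'F, hb'max, h⟩⟩
  have hsuccV : ∀ ρ ∈ V, succIn V ρ = succIn (W ∩ {ρ' | η ≤ ρ'}) ρ ∩ V := by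
    intro ρ hρ
    ext x
    constructor
    · rintro ⟨hxV, hlt, hnb⟩
      refine ⟨⟨hVE hxV, hlt, ?_⟩, hxV⟩
      rintro ⟨e, heE, h1, h2⟩
      exact hnb ⟨e, hconv x hxV e heE h2.le, h1, h2⟩
    · rintro ⟨⟨hxE, hlt, hnb⟩, hxV⟩
      exact ⟨hxV, hlt, fun ⟨e, heV, h1, h2⟩ => hnb ⟨e, hVE heV, h1, h2⟩⟩
  -- finiteness of pruned successors
  have hdiff : ∀ ρ ∈ V, (succIn (W ∩ {ρ' | η ≤ ρ'}) ρ \ V).Finite := by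
    intro ρ hρ
    -- if some maximal element of pη in F lies below ρ, nothing is pruned
    rcases hρ.2 with hA | ⟨b', hb'F, hb'max, hb'ρ⟩
    swap
    · refine Set.Finite.subset (Set.finite_empty) ?_
      rintro x ⟨hx, hxV⟩
      exact absurd ⟨hx.1, Or.inr ⟨b', hb'F, hb'max, hb'ρ.trans hx.2.1.le⟩⟩ hxV
    obtain ⟨f, hfF, hρf⟩ := hA
    obtain ⟨b, hbpη, hbρ, hbgr⟩ := hgr ρ (hVE hρ)
    have hbF : b ∈ F := sb_downward hpηCWT hF b hbpη f (hfF)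
      (by exact hbρ.trans hρf)
    by_cases hbmax : b ∈ maxIn ((W ∩ B₁) ∩ {ρ' | η ≤ ρ'})
    · refine Set.Finite.subset (Set.finite_empty) ?_
      rintro x ⟨hx, hxV⟩
      exact absurd ⟨hx.1, Or.inr ⟨b, hbF, hbmax, hbρ.trans hx.2.1.le⟩⟩ hxV
    · have hcl := hclass ρ hρ b hbpη hbρ hbgr hbF hbmax
      have hchoice : ∀ x, ∃ a, x ∈ succIn (W ∩ {ρ' | η ≤ ρ'}) ρ \ V →
          (a ∈ succIn ((W ∩ B₁) ∩ {ρ' | η ≤ ρ'}) b ∧ a ∉ F ∧ x ≤ a) := by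
        intro x
        by_cases hx : x ∈ succIn (W ∩ {ρ' | η ≤ ρ'}) ρ \ V
        · rcases hcl x hx.1 with hxV | ⟨a, ha⟩
          · exact absurd hxV hx.2
          · exact ⟨a, fun _ => ha⟩
        · exact ⟨x, fun h => absurd h hx⟩
      choose g hg using hchoice
      have htfin : (succIn ((W ∩ B₁) ∩ {ρ' | η ≤ ρ'}) b \ succIn F b).Finite :=
        (hF.2.2.2 b hbF).2
      refine Set.Finite.of_finite_image (f := g) (Set.Finite.subset htfin ?_) ?_
      · rintro y ⟨x, hx, rfl⟩
        obtain ⟨h1, h2, -⟩ := hg x hx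
        exact ⟨h1, fun hs => h2 hs.1⟩
      · intro x hx x' hx' heq
        obtain ⟨ha1, -, ha3⟩ := hg x hx
        obtain ⟨hb1, -, hb3⟩ := hg x' hx'
        rw [heq] at ha3
        have haB₂ : g x' ∈ B₂ := hpη_sub_B₂ hb1.1
        have hxs : x ∈ succIn (W ∩ {ρ' | η ≤ ρ'}) ρ := hx.1
        have hx's : x' ∈ succIn (W ∩ {ρ' | η ≤ ρ'}) ρ := hx'.1
        rcases h₂.comp (hE_sub_B₂ hxs.1) (hE_sub_B₂ hx's.1) haB₂ ha3 hb3 with h | h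
        · rcases eq_or_lt_of_le h with heq' | hlt
          · exact heq'
          · exact absurd ⟨x, hxs.1, hxs.2.1, hlt⟩ hx's.2.2
        · rcases eq_or_lt_of_le h with heq' | hlt
          · exact heq'.symm
          · exact absurd ⟨x', hx's.1, hx's.2.1, hlt⟩ hxs.2.2
  have hVCWT : CWT M V := CWT_of_subset hECWT hVE ⟨η, hηrootV⟩
    (fun ν hν => ⟨hsuccV ν hν, by
      rw [hsuccV ν hν, Set.diff_self_inter]
      exact hdiff ν hν⟩)
  have hVsb : sb M (W ∩ {ρ | η ≤ ρ}) V :=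
    ⟨hVCWT, hVE, ⟨η, isRoot_cone hη.1, hηrootV⟩,
      fun ν hν => ⟨by rw [hsuccV ν hν]; exact Set.inter_subset_left,
        by rw [hsuccV ν hν, Set.diff_self_inter]; exact hdiff ν hν⟩⟩
  have hVB₂ : V ⊆ B₂ := fun x hx => hE_sub_B₂ (hVE hx)
  have hfrontV : IsFront V (Y' ∩ V) := by
    refine ⟨Set.inter_subset_right, fun a ha b hb hne => hY'anti a ha.1 b hb.1 hne, ?_⟩
    intro ν hν
    obtain ⟨μ, hμV, hνμ, hmax⟩ := exists_maximal_above h₂ hVB₂ hν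
    have hμE : μ ∈ W ∩ {ρ | η ≤ ρ} := hVE hμV
    have hsuccVμ : succIn V μ = ∅ := by
      ext x
      simp only [Set.mem_empty_iff_false, iff_false]
      intro hx
      exact hmax x hx.1 hx.2.1
    have hsuccEμ : succIn (W ∩ {ρ | η ≤ ρ}) μ = ∅ := by
      rcases hECWT.2.2.2.2.2.1 μ hμE with h | h
      · exact h
      · exfalso
        have hsub : succIn (W ∩ {ρ | η ≤ ρ}) μ ⊆ succIn (W ∩ {ρ | η ≤ ρ}) μ \ V := by
          intro x hx
          refine ⟨hx, fun hxV => ?_⟩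
          have hx' : x ∈ succIn V μ := by
            rw [hsuccV μ hμV]
            exact ⟨hx, hxV⟩
          rw [hsuccVμ] at hx'
          exact hx'
        exact h ((hdiff μ hμV).subset hsub)
    have hμEmax : ∀ x ∈ W ∩ {ρ | η ≤ ρ}, ¬ μ < x := (maxIn_of_succ_empty hECWT hμE hsuccEμ).2
    have hμWmax : ∀ x ∈ W, ¬ μ < x := fun x hx hlt => hμEmax x ⟨hx, hμE.2.trans hlt.le⟩ hlt
    have hμB₂max : ∀ b ∈ B₂, ¬ μ < b := sb_maximal_to_B h₂ hW hμE.1 hμWmax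
    obtain ⟨b, hbpη, hbμ, hbgr⟩ := hgr μ hμE
    have hbF : b ∈ F := by
      rcases hμV.2 with ⟨f, hfF, hμf⟩ | ⟨b', hb'F, hb'max, hb'μ⟩
      · exact sb_downward hpηCWT hF b hbpη f hfF (hbμ.trans hμf)
      · have hb'b : b' ≤ b := hbgr b' (hF_sub hb'F).1 hb'μ
        rcases eq_or_lt_of_le hb'b with rfl | hlt
        · exact hb'F
        · exact absurd hlt (hb'max.2 b hbpη)
    by_cases hbmax : b ∈ maxIn ((W ∩ B₁) ∩ {ρ | η ≤ ρ})
    · obtain ⟨y, hyY'F, hcy⟩ := hFfr.2.2 b hbF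
      have hyb : y ≤ b := by
        rcases hcy with h | h
        · exact h
        · rcases eq_or_lt_of_le h with rfl | hlt
          · exact le_rfl
          · exact absurd hlt (hbmax.2 y (hF_sub hyY'F.2))
      have hyV : y ∈ V := ⟨hpη_sub_E (hF_sub hyY'F.2), Or.inl ⟨y, hyY'F.2, le_rfl⟩⟩
      have hyμ : y ≤ μ := hyb.trans hbμ
      rcases h₂.comp (hVB₂ hν) (hpη_sub_B₂ (hF_sub hyY'F.2)) (hVB₂ hμV) hνμ hyμ with h | h
      · exact ⟨y, ⟨hyY'F.1, hyV⟩, Or.inr h⟩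
      · exact ⟨y, ⟨hyY'F.1, hyV⟩, Or.inl h⟩
    · exfalso
      have hbm : ∃ x ∈ W ∩ B₁, b < x := by
        by_contra hcon
        push_neg at hcon
        exact hbmax ⟨hbpη, fun z hz hbz => hcon z hz.1 hbz⟩
      by_cases hμp : μ ∈ W ∩ B₁
      · have hμb : μ ≤ b := hbgr μ hμp le_rfl
        obtain ⟨x, hxp, hbx⟩ := hbm
        exact hμB₂max x (hW.2.1 hxp.1) (lt_of_le_of_lt hμb hbx)
      · obtain ⟨a, hasucc, hμa⟩ := align h₂ hsb'' hW hWsub hfr hμE.1 hμp hbpη.1 hbμ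
          (fun x hx hxμ => hbgr x hx hxμ) hbm
        have hlt : μ < a := lt_of_le_of_ne hμa (fun h => hμp (h ▸ hasucc.1))
        exact hμB₂max a (hW.2.1 hasucc.1.1) hlt
  exact ⟨hY'M, hY'anti, V, hVsb, hfrontV⟩

end MainPart3
/-- if `B₁ ≤*_M B₂` and `Y` is a front of `B₁`, then there is `B₂' ∈ sb(B₂)`
such that `Y ∩ B₂'` is a front of `B₂'` and `(B₁)_{≥η} ≤*_M (B₂')_{≥η}` for all
`η ∈ Y ∩ B₂'`. -/
theorem leStar_front_restrict [PartialOrder α] (M B₁ B₂ : Set α)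
    (h₁ : CWT M B₁) (h₂ : CWT M B₂) (hle : leStar M B₁ B₂)
    (Y : Set α) (hY : IsFront B₁ Y) :
    ∃ B₂', sb M B₂ B₂' ∧ IsFront B₂' (Y ∩ B₂') ∧
      ∀ η ∈ Y ∩ B₂', leStar M (B₁ ∩ {ρ | η ≤ ρ}) (B₂' ∩ {ρ | η ≤ ρ}) := by
  obtain ⟨-, -, hroots, B₂'', hsb'', hpsb, htrans⟩ := hle
  have hstarCWT : CWT M (B₂'' ∩ B₁) := hpsb.1
  have hQaf : IsAlmostFront M (B₂'' ∩ B₁) (maxIn (B₂'' ∩ B₁)) := by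
    refine ⟨fun x hx => h₁.1 hx.1.2, (maxIn_front hstarCWT).2.1, B₂'' ∩ B₁,
      sb_self hstarCWT, ?_⟩
    have heq : maxIn (B₂'' ∩ B₁) ∩ (B₂'' ∩ B₁) = maxIn (B₂'' ∩ B₁) :=
      Set.inter_eq_self_of_subset_left (fun x hx => hx.1)
    rw [heq]
    exact maxIn_front hstarCWT
  obtain ⟨-, -, W₀, hW₀, hfr₀⟩ := htrans _ hQaf
  have hW : sb M B₂ (W₀ ∩ B₂'') := sb_inter h₂ hW₀ hsb''
  have hWsub : W₀ ∩ B₂'' ⊆ B₂'' := Set.inter_subset_right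
  have hfr : IsFront (W₀ ∩ B₂'') (maxIn (B₂'' ∩ B₁) ∩ (W₀ ∩ B₂'')) :=
    front_shrink h₂ hW Set.inter_subset_left (fun x hx => hsb''.2.1 hx.1.1) hfr₀
  refine ⟨W₀ ∩ B₂'', hW, part2 h₁ h₂ hsb'' hpsb hW hWsub hfr hroots hY, ?_⟩
  intro η hη
  exact part3 h₁ h₂ hsb'' hpsb hW hWsub hfr hroots ⟨hη.2, hY.1 hη.1⟩
end

section
/- Let x ∈ 𝐊, B ∈ ℬ_x, and let Y₁, Y₂ be fronts of B with Y₂ above Y₁ (every element of Y₂ is ≥_{M_x} some element of Y₁). Let h : Y₂ → Y₁ be the projection, i.e. h(ν₂) = ν₁ iff ν₁ ∈ Y₁, ν₂ ∈ Y₂ and ν₁ ≤_{M_x} ν₂. Then D^x_{Y₁} = {A ⊆ Y₁ : h⁻¹[A] ∈ D^x_{Y₂}}; thus h witnesses D^x_{Y₁} ≤_RK D^x_{Y₂}. -/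
open Set Cardinal

universe u

variable {α : Type u}

section KDefs

variable (α) [PartialOrder α]

/-- A member of the class `𝐊`: a system of approximations to a system of ultrafilters. -/
structure KSys where
  /-- the underlying set of the partial order `M_x` (the order is inherited from `α`) -/
  M : Set α
  /-- the root, i.e. the least element, of `M_x` -/
  rt : α
  rt_mem : rt ∈ M
  rt_least : ∀ a ∈ M, rt ≤ a
  /-- the system `⟨𝒜^x_η : η ∈ M_x⟩` -/
  A : α → Set (Set α)
  A_empty : ∀ η, η ∉ M → A η = ∅
  A_cwt : ∀ η ∈ M, ∀ B ∈ A η, CWT M B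
  A_root : ∀ η ∈ M, ∀ B ∈ A η, IsRoot B η
  A_singleton : ∀ η ∈ M, {η} ∈ A η
  /-- the partial order `≤_x` on `ℬ_x = 𝒜^x_{rt} \ {{rt}}` -/
  lex : Set α → Set α → Prop
  lex_mem : ∀ B₁ B₂, lex B₁ B₂ →
    B₁ ∈ A rt \ {({rt} : Set α)} ∧ B₂ ∈ A rt \ {({rt} : Set α)}
  lex_refl : ∀ B ∈ A rt \ {({rt} : Set α)}, lex B B
  lex_trans : ∀ B₁ B₂ B₃, lex B₁ B₂ → lex B₂ B₃ → lex B₁ B₃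
  lex_antisymm : ∀ B₁ B₂, lex B₁ B₂ → lex B₂ B₁ → B₁ = B₂
  lex_directed : ∀ B₁ ∈ A rt \ {({rt} : Set α)}, ∀ B₂ ∈ A rt \ {({rt} : Set α)},
    ∃ B₃ ∈ A rt \ {({rt} : Set α)}, lex B₁ B₃ ∧ lex B₂ B₃
  lex_leStar : ∀ B₁ B₂, lex B₁ B₂ → leStar M B₁ B₂
  A_restrict : ∀ η ∈ M, ∀ B ∈ A η, ∀ ν ∈ B, B ∩ {ρ | ν ≤ ρ} ∈ A ν

variable {α}

namespace KSys

/-- `ℬ_x = 𝒜^x_{rt_x} \ {{rt_x}}`. -/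
def Bf (x : KSys α) : Set (Set α) :=
  x.A x.rt \ {({x.rt} : Set α)}

/-- The filter `D^x_Y` on an almost front `Y`. -/
def D (x : KSys α) (Y : Set α) : Set (Set α) :=
  {Z | Z ⊆ Y ∧ ∃ B ∈ x.Bf, ∃ B', sb x.M B B' ∧ IsAlmostFront x.M B Y ∧ B' ∩ Y ⊆ Z}

/-- The ideal `id_x(ν,B)` on `suc_B(ν)`. -/
def idl (x : KSys α) (ν : α) (B : Set α) : Set (Set α) :=
  {C | C ⊆ succIn B ν ∧ ∃ F : Finset α, (F : Set α) ⊆ x.M \ {ρ | ν ≤ ρ} ∧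
    ∀ ϱ ∈ C, ∃ ρ ∈ F, Compat x.M ϱ ρ}

/-- `‖x‖ = |M_x| + Σ {|𝒜^x_η| : η ∈ M_x}`. -/
noncomputable def norm (x : KSys α) : Cardinal.{u} :=
  Cardinal.mk ↥x.M + Cardinal.sum fun η : ↥x.M => Cardinal.mk ↥(x.A ↑η)

end KSys

/-- The relation `x ≤_𝐊 y`. -/
def KLE (x y : KSys α) : Prop :=
  x.M ⊆ y.M ∧
  (∀ η ∈ x.M, ∀ ν ∈ x.M, (Compat x.M η ν ↔ Compat y.M η ν)) ∧
  (∀ η ∈ x.M, x.A η ⊆ y.A η) ∧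
  y.rt = x.rt ∧
  (∀ B₁ ∈ x.Bf, ∀ B₂ ∈ x.Bf, (x.lex B₁ B₂ ↔ y.lex B₁ B₂))

end KDefs

section Aux

variable [PartialOrder α]

lemma chain_exists_max {C : Set α} (hfin : C.Finite) (hne : C.Nonempty)
    (hch : IsChain (· ≤ ·) C) : ∃ m ∈ C, ∀ z ∈ C, z ≤ m := by
  obtain ⟨m, hm, hmax⟩ := Set.Finite.exists_maximalFor id C hfin hne
  refine ⟨m, hm, fun z hz => ?_⟩
  rcases eq_or_ne z m with rfl | hne'
  · exact le_refl _
  · rcases hch hz hm hne' with h | h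
    · exact h
    · exact hmax hz h

lemma chain_exists_min {C : Set α} (hfin : C.Finite) (hne : C.Nonempty)
    (hch : IsChain (· ≤ ·) C) : ∃ m ∈ C, ∀ z ∈ C, m ≤ z := by
  obtain ⟨m, hm, hmin⟩ := Set.Finite.exists_minimalFor id C hfin hne
  refine ⟨m, hm, fun z hz => ?_⟩
  rcases eq_or_ne z m with rfl | hne'
  · exact le_refl _
  · rcases hch hz hm hne' with h | h
    · exact hmin hz h
    · exact h

lemma root_unique {B : Set α} {r r' : α} (h1 : IsRoot B r) (h2 : IsRoot B r') : r = r' :=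
  le_antisymm (h1.2 r' h2.1) (h2.2 r h1.1)

lemma succIn_inter_sub {B B' : Set α} (hsub : B' ⊆ B) {ν : α} :
    succIn B ν ∩ B' ⊆ succIn B' ν := by
  rintro ρ ⟨⟨hρB, hlt, hno⟩, hρB'⟩
  exact ⟨hρB', hlt, fun ⟨σ, hσ, h1, h2⟩ => hno ⟨σ, hsub hσ, h1, h2⟩⟩

lemma maxIn_of_succIn_empty {M B : Set α} (hc : CWT M B) {ρ : α} (hρ : ρ ∈ B)
    (hemp : succIn B ρ = ∅) : ρ ∈ maxIn B := by
  refine ⟨hρ, fun σ hσ hlt => ?_⟩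
  have hchain : IsChain (· ≤ ·) {τ ∈ B | ρ < τ ∧ τ ≤ σ} := by
    intro a ha b hb _
    exact hc.2.2.2.1 σ hσ a ha.1 b hb.1 ha.2.2 hb.2.2
  have hfin : {τ ∈ B | ρ < τ ∧ τ ≤ σ}.Finite :=
    hc.2.2.2.2.1 _ (fun τ hτ => hτ.1) hchain
  have hne : {τ ∈ B | ρ < τ ∧ τ ≤ σ}.Nonempty := ⟨σ, hσ, hlt, le_refl _⟩
  obtain ⟨τ₀, hτ₀, hmin⟩ := chain_exists_min hfin hne hchain
  have hmem : τ₀ ∈ succIn B ρ := by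
    refine ⟨hτ₀.1, hτ₀.2.1, ?_⟩
    rintro ⟨σ', hσ'B, h1, h2⟩
    exact absurd (hmin σ' ⟨hσ'B, h1, h2.le.trans hτ₀.2.2⟩) h2.not_ge
  rw [hemp] at hmem
  exact hmem

end Aux

section Aux2

variable [PartialOrder α] {M B B' P D E F Q : Set α}

structure TSub (M B B' : Set α) : Prop where
  cwt : CWT M B
  cwt' : CWT M B'
  sub : B' ⊆ B
  root : ∃ r, IsRoot B r ∧ IsRoot B' r
  succ_sub : ∀ ν ∈ B', succIn B' ν ⊆ succIn B ν
  max_mem : ∀ ρ ∈ B', succIn B' ρ = ∅ → ρ ∈ maxIn B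

lemma TSub.mem_of_le (t : TSub M B B') {μ ν : α} (hμ : μ ∈ B) (hν : ν ∈ B')
    (hle : μ ≤ ν) : μ ∈ B' := by
  by_contra hnot
  obtain ⟨r, hrB, hrB'⟩ := t.root
  have hcomp : ∀ σ ∈ B', σ ≤ ν → σ < μ ∨ μ < σ := by
    intro σ hσ hσν
    rcases t.cwt.2.2.2.1 ν (t.sub hν) σ (t.sub hσ) μ hμ hσν hle with h | h
    · exact Or.inl (lt_of_le_of_ne h (by rintro rfl; exact hnot hσ))
    · exact Or.inr (lt_of_le_of_ne h (by rintro rfl; exact hnot hσ))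
  have hch1 : IsChain (· ≤ ·) {σ ∈ B' | σ ≤ ν ∧ σ < μ} := fun a ha b hb _ =>
    t.cwt'.2.2.2.1 ν hν a ha.1 b hb.1 ha.2.1 hb.2.1
  have hch2 : IsChain (· ≤ ·) {σ ∈ B' | σ ≤ ν ∧ μ < σ} := fun a ha b hb _ =>
    t.cwt'.2.2.2.1 ν hν a ha.1 b hb.1 ha.2.1 hb.2.1
  have hμν : μ < ν := lt_of_le_of_ne hle (by rintro rfl; exact hnot hν)
  have hrμ : r < μ := lt_of_le_of_ne (hrB.2 μ hμ) (by rintro rfl; exact hnot hrB'.1)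
  have hne1 : {σ ∈ B' | σ ≤ ν ∧ σ < μ}.Nonempty := ⟨r, hrB'.1, hrB'.2 ν hν, hrμ⟩
  have hne2 : {σ ∈ B' | σ ≤ ν ∧ μ < σ}.Nonempty := ⟨ν, hν, le_refl _, hμν⟩
  have hfin1 := t.cwt'.2.2.2.2.1 _ (fun σ hσ => hσ.1) hch1
  have hfin2 := t.cwt'.2.2.2.2.1 _ (fun σ hσ => hσ.1) hch2
  obtain ⟨σs, hσs, hmax⟩ := chain_exists_max hfin1 hne1 hch1
  obtain ⟨τ, hτ, hmin⟩ := chain_exists_min hfin2 hne2 hch2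
  have hστ : σs < τ := hσs.2.2.trans hτ.2.2
  have hsucc : τ ∈ succIn B' σs := by
    refine ⟨hτ.1, hστ, ?_⟩
    rintro ⟨ϱ, hϱ, h1, h2⟩
    have hϱν : ϱ ≤ ν := h2.le.trans hτ.2.1
    rcases hcomp ϱ hϱ hϱν with h | h
    · exact absurd (hmax ϱ ⟨hϱ, hϱν, h⟩) h1.not_ge
    · exact absurd (hmin ϱ ⟨hϱ, hϱν, h⟩) h2.not_ge
  exact (t.succ_sub σs hσs.1 hsucc).2.2 ⟨μ, hμ, hσs.2.2, hτ.2.2⟩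

lemma TSub.succ_eq (t : TSub M B B') {ν : α} (hν : ν ∈ B') :
    succIn B' ν = succIn B ν ∩ B' :=
  Set.Subset.antisymm (fun ρ hρ => ⟨t.succ_sub ν hν hρ, hρ.1⟩) (succIn_inter_sub t.sub)

lemma exists_max_above (hc : CWT M B') {ν : α} (hν : ν ∈ B') :
    ∃ ρ ∈ maxIn B', ν ≤ ρ := by
  have hz := zorn_le_nonempty₀ {σ ∈ B' | ν ≤ σ} ?_ ν ⟨hν, le_refl _⟩
  · obtain ⟨m, hνm, hmax⟩ := hz
    refine ⟨m, ⟨hmax.1.1, fun σ hσ hlt => ?_⟩, hνm⟩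
    exact absurd (hmax.2 ⟨hσ, hνm.trans hlt.le⟩ hlt.le) hlt.not_ge
  · intro c hcs hch y hy
    have hfin : c.Finite := hc.2.2.2.2.1 c (fun z hz => (hcs hz).1) hch
    obtain ⟨m, hm, hub⟩ := chain_exists_max hfin ⟨y, hy⟩ hch
    exact ⟨m, hcs hm, hub⟩

lemma TSub.front (t : TSub M B B') {Y : Set α} (hY : IsFront B Y) :
    IsFront B' (Y ∩ B') := by
  refine ⟨fun y hy => hy.2, fun η hη ν hν hne => hY.2.1 η hη.1 ν hν.1 hne,
    fun ν hν => ?_⟩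
  obtain ⟨ρ, hρmax, hνρ⟩ := exists_max_above t.cwt' hν
  have hρB : ρ ∈ maxIn B := by
    apply t.max_mem ρ hρmax.1
    exact Set.eq_empty_iff_forall_notMem.mpr (fun σ hσ => hρmax.2 σ hσ.1 hσ.2.1)
  obtain ⟨η, hηY, hcomp⟩ := hY.2.2 ρ (t.sub hρmax.1)
  have hηρ : η ≤ ρ := by
    rcases hcomp with h | h
    · exact h
    · rcases eq_or_lt_of_le h with e | h'
      · exact e.ge
      · exact absurd h' (hρB.2 η (hY.1 hηY))
  have hηB' : η ∈ B' := t.mem_of_le (hY.1 hηY) hρmax.1 hηρ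
  exact ⟨η, ⟨hηY, hηB'⟩, t.cwt.2.2.2.1 ρ (t.sub hρmax.1) η (hY.1 hηY) ν (t.sub hν) hηρ hνρ⟩

lemma TSub.ofSb (hc : CWT M B) (hs : sb M B B') : TSub M B B' where
  cwt := hc
  cwt' := hs.1
  sub := hs.2.1
  root := hs.2.2.1
  succ_sub := fun ν hν => (hs.2.2.2 ν hν).1
  max_mem := fun ρ hρ hemp => by
    have hfin : (succIn B ρ).Finite := by
      have := (hs.2.2.2 ρ hρ).2
      rwa [hemp, Set.diff_empty] at this
    rcases hc.2.2.2.2.2.1 ρ (hs.2.1 hρ) with h | h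
    · exact maxIn_of_succIn_empty hc (hs.2.1 hρ) h
    · exact absurd hfin h

lemma TSub.ofPsb (hc : CWT M B) (hp : psb M B B') : TSub M B B' where
  cwt := hc
  cwt' := hp.1
  sub := hp.2.1
  root := hp.2.2.1
  succ_sub := fun ν hν => by
    by_cases hm : ν ∈ maxIn B
    · exact fun ρ hρ => absurd hρ.2.1 (hm.2 ρ (hp.2.1 hρ.1))
    · exact (hp.2.2.2 ν ⟨hν, hm⟩).2
  max_mem := fun ρ hρ hemp => by
    by_contra hm
    have := (hp.2.2.2 ρ ⟨hρ, hm⟩).1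
    rw [hemp] at this
    exact this Set.finite_empty

lemma sb_refl (hc : CWT M B) : sb M B B := by
  obtain ⟨r, hr⟩ := hc.2.2.1
  exact ⟨hc, Set.Subset.rfl, ⟨r, hr, hr⟩,
    fun ν _ => ⟨Set.Subset.rfl, by rw [Set.diff_self]; exact Set.finite_empty⟩⟩

lemma sb_trans (ht1 : sb M B P) (ht2 : sb M P E) : sb M B E := by
  refine ⟨ht2.1, ht2.2.1.trans ht1.2.1, ?_, fun ν hν => ?_⟩
  · obtain ⟨r, hr1, hr2⟩ := ht1.2.2.1
    obtain ⟨r', hr1', hr2'⟩ := ht2.2.2.1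
    obtain rfl : r = r' := root_unique hr2 hr1'
    exact ⟨r, hr1, hr2'⟩
  · refine ⟨(ht2.2.2.2 ν hν).1.trans (ht1.2.2.2 ν (ht2.2.1 hν)).1, ?_⟩
    have h1 := (ht1.2.2.2 ν (ht2.2.1 hν)).2
    have h2 := (ht2.2.2.2 ν hν).2
    refine (h1.union h2).subset ?_
    intro ρ hρ
    by_cases hP : ρ ∈ succIn P ν
    · exact Or.inr ⟨hP, hρ.2⟩
    · exact Or.inl ⟨hρ.1, hP⟩

lemma psb_of_sb (hc : CWT M B) (hs : sb M B B') : psb M B B' := by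
  refine ⟨hs.1, hs.2.1, hs.2.2.1, fun ν hν => ?_⟩
  have hss := hs.2.2.2 ν hν.1
  have hBinf : (succIn B ν).Infinite := by
    rcases hc.2.2.2.2.2.1 ν (hs.2.1 hν.1) with h | h
    · exact absurd (maxIn_of_succIn_empty hc (hs.2.1 hν.1) h) hν.2
    · exact h
  refine ⟨?_, hss.1⟩
  have := hBinf.diff hss.2
  rwa [Set.diff_diff_cancel_left hss.1] at this

lemma psb_comp (hp : psb M B P) (hs : sb M P Q) : psb M B Q := by
  refine ⟨hs.1, hs.2.1.trans hp.2.1, ?_, fun ν hν => ?_⟩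
  · obtain ⟨r, hr1, hr2⟩ := hp.2.2.1
    obtain ⟨r', hr1', hr2'⟩ := hs.2.2.1
    obtain rfl : r = r' := root_unique hr2 hr1'
    exact ⟨r, hr1, hr2'⟩
  · have hνP : ν ∈ P := hs.2.1 hν.1
    have hPinf := (hp.2.2.2 ν ⟨hνP, hν.2⟩).1
    have hss := hs.2.2.2 ν hν.1
    refine ⟨?_, hss.1.trans (hp.2.2.2 ν ⟨hνP, hν.2⟩).2⟩
    have := hPinf.diff hss.2
    rwa [Set.diff_diff_cancel_left hss.1] at this

end Aux2

section Aux3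

variable [PartialOrder α] {M B B' P D E F Q : Set α}

lemma succ_inter_eq (tD : TSub M B D) (tP : TSub M B P) {ν : α} (hν : ν ∈ D ∩ P) :
    succIn (D ∩ P) ν = succIn B ν ∩ (D ∩ P) := by
  apply Set.Subset.antisymm
  · rintro ρ ⟨hρm, hlt, hno⟩
    refine ⟨⟨tD.sub hρm.1, hlt, ?_⟩, hρm⟩
    rintro ⟨σ, hσB, h1, h2⟩
    exact hno ⟨σ, ⟨tD.mem_of_le hσB hρm.1 h2.le, tP.mem_of_le hσB hρm.2 h2.le⟩, h1, h2⟩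
  · exact succIn_inter_sub (fun y hy => tD.sub hy.1)

lemma sb_inter_psb (hc : CWT M B) (hd : sb M B D) (hp : psb M B P) :
    sb M P (D ∩ P) := by
  have tD := TSub.ofSb hc hd
  have tP := TSub.ofPsb hc hp
  obtain ⟨r, hrB, hrD⟩ := hd.2.2.1
  obtain ⟨r', hrB', hrP⟩ := hp.2.2.1
  obtain rfl : r = r' := root_unique hrB hrB'
  have hrDP : IsRoot (D ∩ P) r := ⟨⟨hrD.1, hrP.1⟩, fun y hy => hrD.2 y hy.1⟩
  have hkey : ∀ ν ∈ D ∩ P, succIn (D ∩ P) ν = succIn P ν ∩ D := by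
    intro ν hν
    rw [succ_inter_eq tD tP hν, tP.succ_eq hν.2]
    ext ρ
    simp only [Set.mem_inter_iff]
    tauto
  have hsubP : ∀ ν ∈ D ∩ P, succIn (D ∩ P) ν ⊆ succIn P ν := by
    intro ν hν
    rw [hkey ν hν]
    exact Set.inter_subset_left
  have hdiff : ∀ ν ∈ D ∩ P, (succIn P ν \ succIn (D ∩ P) ν).Finite := by
    intro ν hν
    refine ((hd.2.2.2 ν hν.1).2).subset ?_
    intro ρ hρ
    refine ⟨tP.succ_sub ν hν.2 hρ.1, fun hρD => ?_⟩
    exact hρ.2 (by rw [hkey ν hν]; exact ⟨hρ.1, hρD.1⟩)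
  have hcwt : CWT M (D ∩ P) := by
    refine ⟨fun y hy => hp.1.1 hy.2, Set.Countable.mono Set.inter_subset_left hd.1.2.1,
      ⟨r, hrDP⟩, ?_, ?_, ?_, ?_, ?_⟩
    · intro ν hν η hη ρ hρ h1 h2
      exact hd.1.2.2.2.1 ν hν.1 η hη.1 ρ hρ.1 h1 h2
    · intro C hC hch
      exact hd.1.2.2.2.2.1 C (fun y hy => (hC hy).1) hch
    · intro ν hν
      rcases hp.1.2.2.2.2.2.1 ν hν.2 with hP0 | hPinf
      · left
        rw [hkey ν hν, hP0, Set.empty_inter]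
      · right
        have := hPinf.diff (hdiff ν hν)
        rwa [Set.diff_diff_cancel_left (hsubP ν hν)] at this
    · intro η hη ν hν h1 h2
      exact hd.1.2.2.2.2.2.2.1 η hη.1 ν hν.1 h1 h2
    · intro ν hν F hF
      have hex : ∃ σ ∈ D ∩ P, ν < σ := by
        by_contra hno
        push_neg at hno
        exact hν.2 ⟨hν.1, fun σ hσ => hno σ hσ⟩
      obtain ⟨σ, hσ, hlt⟩ := hex
      have hnm : ν ∉ maxIn P := fun hm => hm.2 σ hσ.2 hlt
      have hinf := hp.1.2.2.2.2.2.2.2 ν ⟨hν.1.2, hnm⟩ F hF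
      have := hinf.diff (hdiff ν hν.1)
      refine this.mono ?_
      rintro ϱ ⟨⟨hϱP, hϱc⟩, hϱ2⟩
      refine ⟨?_, hϱc⟩
      by_contra hnot
      exact hϱ2 ⟨hϱP, hnot⟩
  exact ⟨hcwt, Set.inter_subset_right, ⟨r, hrP, hrDP⟩,
    fun ν hν => ⟨hsubP ν hν, hdiff ν hν⟩⟩

lemma TSub.trans (t : TSub M B P) (hs : sb M P E) : TSub M B E where
  cwt := t.cwt
  cwt' := hs.1
  sub := hs.2.1.trans t.sub
  root := by
    obtain ⟨r, hr1, hr2⟩ := t.root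
    obtain ⟨r', hr1', hr2'⟩ := hs.2.2.1
    obtain rfl : r = r' := root_unique hr2 hr1'
    exact ⟨r, hr1, hr2'⟩
  succ_sub := fun ν hν => ((hs.2.2.2 ν hν).1).trans (t.succ_sub ν (hs.2.1 hν))
  max_mem := fun ρ hρ hemp => by
    have hfin : (succIn P ρ).Finite := by
      have := (hs.2.2.2 ρ hρ).2
      rwa [hemp, Set.diff_empty] at this
    have hPemp : succIn P ρ = ∅ := by
      rcases t.cwt'.2.2.2.2.2.1 ρ (hs.2.1 hρ) with h | h
      · exact h
      · exact absurd hfin h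
    exact t.max_mem ρ (hs.2.1 hρ) hPemp

lemma TSub.between (tF : TSub M B F) (tE : TSub M B E) (hEF : E ⊆ F) :
    TSub M F E where
  cwt := tF.cwt'
  cwt' := tE.cwt'
  sub := hEF
  root := by
    obtain ⟨r, hrB, hrF⟩ := tF.root
    obtain ⟨r', hrB', hrE⟩ := tE.root
    obtain rfl : r = r' := root_unique hrB hrB'
    exact ⟨r, hrF, hrE⟩
  succ_sub := fun ν hν ρ hρ =>
    succIn_inter_sub tF.sub ⟨tE.succ_sub ν hν hρ, hEF hρ.1⟩
  max_mem := fun ρ hρ hemp => by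
    have hm := tE.max_mem ρ hρ hemp
    exact ⟨hEF hρ, fun σ hσ => hm.2 σ (tF.sub hσ)⟩

end Aux3


section MainStep

variable [PartialOrder α]

lemma main_step (x : KSys α) {B Bh B'' Ya Yb : Set α}
    (hB : B ∈ x.Bf) (hBh : Bh ∈ x.Bf)
    (hYb : IsFront B Yb)
    (hsbB'' : sb x.M Bh B'') (hafa : IsAlmostFront x.M Bh Ya) :
    ∃ B₂ ∈ x.Bf, ∃ G Y', sb x.M B₂ G ∧ IsAlmostFront x.M B₂ Yb ∧
      Y' ⊆ Ya ∩ B'' ∧ IsFront G (Y' ∩ G) := by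
  have hcB : CWT x.M B := x.A_cwt x.rt x.rt_mem B hB.1
  have hcBh : CWT x.M Bh := x.A_cwt x.rt x.rt_mem Bh hBh.1
  obtain ⟨B₂, hB₂, hlex1, hlex2⟩ := x.lex_directed B hB Bh hBh
  obtain ⟨-, -, -, C, hsbC, hpsbC, htr1⟩ := x.lex_leStar B B₂ hlex1
  obtain ⟨-, -, -, Ch, hsbCh, hpsbCh, htr2⟩ := x.lex_leStar Bh B₂ hlex2
  -- Yb is an almost front of B₂
  have tCB := TSub.ofPsb hcB hpsbC
  have hafYb : IsAlmostFront x.M B₂ Yb :=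
    htr1 Yb ⟨fun y hy => hcB.1 (hYb.1 hy), hYb.2.1, C ∩ B, sb_refl tCB.cwt',
      tCB.front hYb⟩
  -- the Ya side
  obtain ⟨hYaM, hYaAC, F, hsbF, hfrF⟩ := hafa
  have tP := TSub.ofPsb hcBh hpsbCh
  have hcP : CWT x.M (Ch ∩ Bh) := tP.cwt'
  have hsbFP : sb x.M (Ch ∩ Bh) (F ∩ (Ch ∩ Bh)) := sb_inter_psb hcBh hsbF hpsbCh
  have hsbBP : sb x.M (Ch ∩ Bh) (B'' ∩ (Ch ∩ Bh)) := sb_inter_psb hcBh hsbB'' hpsbCh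
  have hpsbBP : psb x.M (Ch ∩ Bh) (B'' ∩ (Ch ∩ Bh)) := psb_of_sb hcP hsbBP
  have hsbE' : sb x.M (B'' ∩ (Ch ∩ Bh)) ((F ∩ (Ch ∩ Bh)) ∩ (B'' ∩ (Ch ∩ Bh))) :=
    sb_inter_psb hcP hsbFP hpsbBP
  have hsbE : sb x.M (Ch ∩ Bh) ((F ∩ (Ch ∩ Bh)) ∩ (B'' ∩ (Ch ∩ Bh))) :=
    sb_trans hsbBP hsbE'
  have hEF : (F ∩ (Ch ∩ Bh)) ∩ (B'' ∩ (Ch ∩ Bh)) ⊆ F := fun y hy => hy.1.1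
  have tBE : TSub x.M Bh ((F ∩ (Ch ∩ Bh)) ∩ (B'' ∩ (Ch ∩ Bh))) := tP.trans hsbE
  have tFE : TSub x.M F ((F ∩ (Ch ∩ Bh)) ∩ (B'' ∩ (Ch ∩ Bh))) :=
    (TSub.ofSb hcBh hsbF).between tBE hEF
  have hfrE := tFE.front hfrF
  have hYeq : (Ya ∩ F) ∩ ((F ∩ (Ch ∩ Bh)) ∩ (B'' ∩ (Ch ∩ Bh))) =
      (Ya ∩ ((F ∩ (Ch ∩ Bh)) ∩ (B'' ∩ (Ch ∩ Bh)))) ∩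
        ((F ∩ (Ch ∩ Bh)) ∩ (B'' ∩ (Ch ∩ Bh))) := by
    ext y
    constructor
    · rintro ⟨⟨h1, h2⟩, h3⟩
      exact ⟨⟨h1, h3⟩, h3⟩
    · rintro ⟨⟨h1, h3⟩, -⟩
      exact ⟨⟨h1, hEF h3⟩, h3⟩
  rw [hYeq] at hfrE
  have hafY' : IsAlmostFront x.M (Ch ∩ Bh)
      (Ya ∩ ((F ∩ (Ch ∩ Bh)) ∩ (B'' ∩ (Ch ∩ Bh)))) :=
    ⟨fun y hy => hYaM hy.1, fun a ha b hb hne => hYaAC a ha.1 b hb.1 hne,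
      (F ∩ (Ch ∩ Bh)) ∩ (B'' ∩ (Ch ∩ Bh)), hsbE, hfrE⟩
  obtain ⟨-, -, G, hsbG, hfrG⟩ := htr2 _ hafY'
  exact ⟨B₂, hB₂, G, Ya ∩ ((F ∩ (Ch ∩ Bh)) ∩ (B'' ∩ (Ch ∩ Bh))), hsbG, hafYb,
    fun y hy => ⟨hy.1, hy.2.2.1⟩, hfrG⟩

end MainStep


/-- if `Y₁, Y₂` are fronts of `B ∈ ℬ_x` with `Y₂` above `Y₁` and `h` is the
projection from `Y₂` to `Y₁`, then `D^x_{Y₁} = {A ⊆ Y₁ : h⁻¹[A] ∈ D^x_{Y₂}}`, i.e. `h`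
witnesses `D^x_{Y₁} ≤_RK D^x_{Y₂}`. -/
theorem D_projection_RK [PartialOrder α] (x : KSys α) (B : Set α) (hB : B ∈ x.Bf)
    (Y₁ Y₂ : Set α) (hY₁ : IsFront B Y₁) (hY₂ : IsFront B Y₂)
    (habove : ∀ η ∈ Y₂, ∃ ν ∈ Y₁, ν ≤ η)
    (h : α → α) (hproj : ∀ ν₂ ∈ Y₂, h ν₂ ∈ Y₁ ∧ h ν₂ ≤ ν₂) :
    x.D Y₁ = {A | A ⊆ Y₁ ∧ {ν ∈ Y₂ | h ν ∈ A} ∈ x.D Y₂} := by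
  have hcB : CWT x.M B := x.A_cwt x.rt x.rt_mem B hB.1
  ext A
  simp only [Set.mem_setOf_eq]
  constructor
  · rintro ⟨hAY, Bh, hBh, B'', hsbB'', hafY₁, hBA⟩
    refine ⟨hAY, fun ν hν => hν.1, ?_⟩
    obtain ⟨B₂, hB₂, G, Y', hsbG, hafYb, hY'sub, hfrG⟩ :=
      main_step x hB hBh hY₂ hsbB'' hafY₁
    refine ⟨B₂, hB₂, G, hsbG, hafYb, ?_⟩
    rintro ν ⟨hνG, hνY₂⟩
    refine ⟨hνY₂, ?_⟩
    obtain ⟨y', hy'mem, hcomp⟩ := hfrG.2.2 ν hνG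
    have hy'Y₁ : y' ∈ Y₁ := (hY'sub hy'mem.1).1
    have hy'ν : y' ≤ ν := by
      rcases hcomp with hle | hge
      · exact hle
      · obtain ⟨μ, hμY₁, hμν⟩ := habove ν hνY₂
        have he : μ = y' := by
          by_contra hne
          exact hY₁.2.1 μ hμY₁ y' hy'Y₁ hne (hμν.trans hge)
        exact he ▸ hμν
    obtain ⟨hhY₁, hhle⟩ := hproj ν hνY₂
    have hcmp := hcB.2.2.2.1 ν (hY₂.1 hνY₂) (h ν) (hY₁.1 hhY₁) y' (hY₁.1 hy'Y₁)
      hhle hy'ν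
    have he : h ν = y' := by
      rcases hcmp with h1 | h1
      · by_contra hne
        exact hY₁.2.1 (h ν) hhY₁ y' hy'Y₁ hne h1
      · by_contra hne
        exact hY₁.2.1 y' hy'Y₁ (h ν) hhY₁ (Ne.symm hne) h1
    rw [he]
    exact hBA ⟨(hY'sub hy'mem.1).2, hy'Y₁⟩
  · rintro ⟨hAY, -, Bh, hBh, B'', hsbB'', hafY₂, hBZ⟩
    refine ⟨hAY, ?_⟩
    obtain ⟨B₂, hB₂, G, Y', hsbG, hafY₁', hY'sub, hfrG⟩ :=
      main_step x hB hBh hY₁ hsbB'' hafY₂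
    refine ⟨B₂, hB₂, G, hsbG, hafY₁', ?_⟩
    rintro μ ⟨hμG, hμY₁⟩
    obtain ⟨ν, hνmem, hcomp⟩ := hfrG.2.2 μ hμG
    have hνY₂ : ν ∈ Y₂ := (hY'sub hνmem.1).1
    obtain ⟨hhY₁, hhle⟩ := hproj ν hνY₂
    have hνZ : h ν ∈ A := (hBZ ⟨(hY'sub hνmem.1).2, hνY₂⟩).2
    have hμν : μ ≤ ν := by
      rcases hcomp with hge | hle
      · obtain ⟨μ', hμ'Y₁, hμ'ν⟩ := habove ν hνY₂
        have he : μ' = μ := by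
          by_contra hne
          exact hY₁.2.1 μ' hμ'Y₁ μ hμY₁ hne (hμ'ν.trans hge)
        exact he ▸ hμ'ν
      · exact hle
    have hcmp := hcB.2.2.2.1 ν (hY₂.1 hνY₂) (h ν) (hY₁.1 hhY₁) μ (hY₁.1 hμY₁)
      hhle hμν
    have he : h ν = μ := by
      rcases hcmp with h1 | h1
      · by_contra hne
        exact hY₁.2.1 (h ν) hhY₁ μ hμY₁ hne h1
      · by_contra hne
        exact hY₁.2.1 μ hμY₁ (h ν) hhY₁ (Ne.symm hne) h1
    exact he ▸ hνZ
end
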